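/- zCDP-to-(ε,δ)-DP conversion bound: if a mechanism satisfies ρ-zCDP, then for any δ ∈ (0,1) it satisfies (ε, δ)-DP with ε = ρ + 2·sqrt(ρ·log(1/δ)). -/

import Mathlib

open Finset Filter

/-- Core Rényi-to-approximate-DP conversion at a fixed order `α > 1`. -/
lemma renyi_to_dp {X : Type*} [Fintype X] (p q : X → ℝ) (δ : ℝ)
    (hppos : ∀ x, 0 < p x) (hqpos : ∀ x, 0 < q x) (hδ0 : 0 < δ)
    (E : Finset X) (α ε : ℝ) (hα : 1 < α)
    (hε : (α - 1)⁻¹ * Real.log (∑ x, q x * (p x / q x) ^ α)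
        + Real.log (1 / δ) * (α - 1)⁻¹ ≤ ε) :
    ∑ x ∈ E, p x ≤ Real.exp ε * ∑ x ∈ E, q x + δ := by
  have hα0 : (0:ℝ) < α := by linarith
  have hb : (0:ℝ) < α - 1 := by linarith
  set M : ℝ := ∑ x, q x * (p x / q x) ^ α with hMdef
  set P : ℝ := ∑ x ∈ E, p x with hPdef
  set A : ℝ := ∑ x ∈ E, q x with hAdef
  have hA0 : 0 ≤ A := Finset.sum_nonneg fun x _ => (hqpos x).le
  by_cases hPδ : P ≤ δ
  · have h1 : 0 ≤ Real.exp ε * A := by positivity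
    linarith
  push_neg at hPδ
  have hP0 : 0 < P := lt_trans hδ0 hPδ
  have hE : E.Nonempty := Finset.nonempty_of_sum_ne_zero (ne_of_gt hP0)
  have hApos : 0 < A := Finset.sum_pos (fun x _ => hqpos x) hE
  have hMpos : 0 < M := by
    refine Finset.sum_pos (fun x _ => ?_) ⟨hE.choose, Finset.mem_univ _⟩
    exact mul_pos (hqpos x) (Real.rpow_pos_of_pos (div_pos (hppos x) (hqpos x)) α)
  -- Hölder
  have hH : P ≤ A ^ (1 - α⁻¹) * M ^ α⁻¹ := by
    have h1 := Real.inner_le_weight_mul_Lp_of_nonneg E hα.le q (fun x => p x / q x)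
        (fun x => (hqpos x).le) (fun x => (div_pos (hppos x) (hqpos x)).le)
    have h2 : ∑ x ∈ E, q x * (p x / q x) = P := by
      refine Finset.sum_congr rfl fun x _ => ?_
      rw [mul_comm, div_mul_cancel₀ _ (ne_of_gt (hqpos x))]
    have h3 : ∑ x ∈ E, q x * (p x / q x) ^ α ≤ M := by
      refine Finset.sum_le_sum_of_subset_of_nonneg (Finset.subset_univ E) fun x _ _ => ?_
      exact le_of_lt (mul_pos (hqpos x) (Real.rpow_pos_of_pos (div_pos (hppos x) (hqpos x)) α))
    rw [h2] at h1
    refine h1.trans ?_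
    have h4 : (∑ x ∈ E, q x * (p x / q x) ^ α) ^ α⁻¹ ≤ M ^ α⁻¹ := by
      apply Real.rpow_le_rpow _ h3 (inv_nonneg.mpr hα0.le)
      exact Finset.sum_nonneg fun x _ =>
        le_of_lt (mul_pos (hqpos x) (Real.rpow_pos_of_pos (div_pos (hppos x) (hqpos x)) α))
    exact mul_le_mul_of_nonneg_left h4 (Real.rpow_nonneg hA0 _)
  have hAe : A ^ (1 - α⁻¹) = Real.exp (Real.log A * (1 - α⁻¹)) :=
    Real.rpow_def_of_pos hApos _
  have hMe : M ^ α⁻¹ = Real.exp (Real.log M * α⁻¹) := Real.rpow_def_of_pos hMpos _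
  rw [hAe, hMe, ← Real.exp_add] at hH
  set a := Real.log A with hadef
  set D := Real.log M with hDdef
  set d := Real.log δ with hddef
  have hδP : d < a * (1 - α⁻¹) + D * α⁻¹ := by
    have h := lt_of_lt_of_le hPδ hH
    have := Real.log_lt_log hδ0 h
    rwa [Real.log_exp] at this
  have hainv : α⁻¹ * α = 1 := inv_mul_cancel₀ (ne_of_gt hα0)
  have hbinv : (α - 1)⁻¹ * (α - 1) = 1 := inv_mul_cancel₀ (ne_of_gt hb)
  have hL : Real.log (1 / δ) = -d := by rw [one_div, Real.log_inv]
  rw [hL] at hε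
  -- clean versions without inverses
  have hδP' : d * α < a * α - a + D := by
    have h := mul_lt_mul_of_pos_right hδP hα0
    calc d * α < (a * (1 - α⁻¹) + D * α⁻¹) * α := h
      _ = a * α - a * (α⁻¹ * α) + D * (α⁻¹ * α) := by ring
      _ = a * α - a + D := by rw [hainv]; ring
  have h1' : D - d ≤ ε * (α - 1) := by
    have h := mul_le_mul_of_nonneg_right hε hb.le
    calc D - d = D * ((α - 1)⁻¹ * (α - 1)) + (-d) * ((α - 1)⁻¹ * (α - 1)) := by
          rw [hbinv]; ring
      _ = ((α - 1)⁻¹ * D + (-d) * (α - 1)⁻¹) * (α - 1) := by ring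
      _ ≤ ε * (α - 1) := h
  have key : a * (1 - α⁻¹) + D * α⁻¹ ≤ ε + a := by
    rw [← mul_le_mul_iff_of_pos_right hα0]
    have hLHS : (a * (1 - α⁻¹) + D * α⁻¹) * α = a * α - a + D := by
      calc (a * (1 - α⁻¹) + D * α⁻¹) * α
          = a * α - a * (α⁻¹ * α) + D * (α⁻¹ * α) := by ring
        _ = a * α - a + D := by rw [hainv]; ring
    rw [hLHS]
    nlinarith [mul_le_mul_of_nonneg_right h1' hα0.le, hδP']
  calc P ≤ Real.exp (a * (1 - α⁻¹) + D * α⁻¹) := hH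
    _ ≤ Real.exp (ε + a) := Real.exp_le_exp.mpr key
    _ = Real.exp ε * A := by rw [Real.exp_add, hadef, Real.exp_log hApos]
    _ ≤ Real.exp ε * A + δ := by linarith

/-- zCDP-to-(ε,δ)-DP conversion: if the (discrete) output distributions `p, q` of a
mechanism on two adjacent datasets satisfy the zCDP Rényi bound
`D_α(p‖q) ≤ ρα` for all `α > 1`, then for any `δ ∈ (0,1)` and every event `E`,
`p(E) ≤ e^ε q(E) + δ` with `ε = ρ + 2√(ρ log(1/δ))`. -/
theorem zcdp_to_approx_dp {X : Type*} [Fintype X] (p q : X → ℝ) (ρ δ : ℝ)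
    (hppos : ∀ x, 0 < p x) (hpsum : ∑ x, p x = 1)
    (hqpos : ∀ x, 0 < q x) (hqsum : ∑ x, q x = 1)
    (hδ : δ ∈ Set.Ioo (0 : ℝ) 1)
    (hzcdp : ∀ α > (1 : ℝ),
      (α - 1)⁻¹ * Real.log (∑ x, q x * (p x / q x) ^ α) ≤ ρ * α) :
    ∀ E : Finset X,
      ∑ x ∈ E, p x ≤
        Real.exp (ρ + 2 * Real.sqrt (ρ * Real.log (1 / δ))) * ∑ x ∈ E, q x + δ := by
  intro E
  obtain ⟨hδ0, hδ1⟩ := hδ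
  set L := Real.log (1 / δ) with hLdef
  have hL0 : 0 < L := Real.log_pos (by rw [lt_div_iff₀ hδ0]; linarith)
  -- ρ ≥ 0 via Cauchy–Schwarz at α = 2
  have hρ0 : 0 ≤ ρ := by
    have h2 := hzcdp 2 (by norm_num)
    have hcs : (1:ℝ) ≤ ∑ x, q x * (p x / q x) ^ (2:ℝ) := by
      have hCS := Finset.sum_mul_sq_le_sq_mul_sq Finset.univ
        (fun x => Real.sqrt (q x)) (fun x => Real.sqrt (q x) * (p x / q x))
      have e1 : ∑ x, Real.sqrt (q x) * (Real.sqrt (q x) * (p x / q x)) = 1 := by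
        rw [← hpsum]
        refine Finset.sum_congr rfl fun x _ => ?_
        rw [← mul_assoc, Real.mul_self_sqrt (hqpos x).le, mul_comm,
          div_mul_cancel₀ _ (ne_of_gt (hqpos x))]
      have e2 : ∑ x, Real.sqrt (q x) ^ 2 = 1 := by
        rw [← hqsum]
        exact Finset.sum_congr rfl fun x _ => Real.sq_sqrt (hqpos x).le
      have e3 : ∑ x, (Real.sqrt (q x) * (p x / q x)) ^ 2
          = ∑ x, q x * (p x / q x) ^ (2:ℝ) := by
        refine Finset.sum_congr rfl fun x _ => ?_
        rw [mul_pow, Real.sq_sqrt (hqpos x).le,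
          show ((2:ℝ) = ((2:ℕ):ℝ)) by norm_num, Real.rpow_natCast]
      rw [e1, e2, e3, one_mul] at hCS
      simpa using hCS
    have hlog : (0:ℝ) ≤ Real.log (∑ x, q x * (p x / q x) ^ (2:ℝ)) := Real.log_nonneg hcs
    have : (0:ℝ) ≤ ρ * 2 := le_trans (by simpa using hlog) h2
    linarith
  rcases eq_or_lt_of_le hρ0 with hρ | hρ
  · -- ρ = 0 : take α → ∞
    subst hρ
    have key : ∀ α : ℝ, 1 < α →
        ∑ x ∈ E, p x ≤ Real.exp (L * (α - 1)⁻¹) * ∑ x ∈ E, q x + δ := by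
      intro α hα
      refine renyi_to_dp p q δ hppos hqpos hδ0 E α _ hα ?_
      have h := hzcdp α hα
      rw [zero_mul] at h
      linarith
    have hgoal : ∑ x ∈ E, p x ≤ ∑ x ∈ E, q x + δ := by
      have t1 : Tendsto (fun α : ℝ => (α - 1)⁻¹) atTop (nhds 0) := by
        apply tendsto_inv_atTop_zero.comp
        exact tendsto_atTop_add_const_right atTop (-1) tendsto_id
      have t2 : Tendsto (fun α : ℝ => L * (α - 1)⁻¹) atTop (nhds 0) := by
        simpa using t1.const_mul L
      have t3 : Tendsto (fun α : ℝ => Real.exp (L * (α - 1)⁻¹)) atTop (nhds 1) := by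
        simpa [Function.comp_def] using (Real.continuous_exp.tendsto 0).comp t2
      have t4 : Tendsto (fun α : ℝ => Real.exp (L * (α - 1)⁻¹) * ∑ x ∈ E, q x + δ)
          atTop (nhds (∑ x ∈ E, q x + δ)) := by
        simpa using (t3.mul_const (∑ x ∈ E, q x)).add_const δ
      refine ge_of_tendsto t4 ?_
      filter_upwards [eventually_gt_atTop (1:ℝ)] with α hα using key α hα
    calc ∑ x ∈ E, p x ≤ ∑ x ∈ E, q x + δ := hgoal
      _ ≤ Real.exp (0 + 2 * Real.sqrt (0 * L)) * ∑ x ∈ E, q x + δ := by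
        rw [zero_mul, Real.sqrt_zero, mul_zero, add_zero, Real.exp_zero, one_mul]
  · -- ρ > 0 : optimal α = 1 + √(L/ρ)
    set u := Real.sqrt ρ with hudef
    set v := Real.sqrt L with hvdef
    have hu : 0 < u := Real.sqrt_pos.mpr hρ
    have hv : 0 < v := Real.sqrt_pos.mpr hL0
    have hu2 : u ^ 2 = ρ := Real.sq_sqrt hρ.le
    have hv2 : v ^ 2 = L := Real.sq_sqrt hL0.le
    set s := v / u with hsdef
    have hs : 0 < s := div_pos hv hu
    have hα : (1:ℝ) < 1 + s := by linarith
    have hsqrt : Real.sqrt (ρ * L) = u * v := by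
      rw [Real.sqrt_mul hρ.le, hudef, hvdef]
    refine renyi_to_dp p q δ hppos hqpos hδ0 E (1 + s) _ hα ?_
    have h := hzcdp (1 + s) hα
    have hsimp : (1 + s - 1 : ℝ) = s := by ring
    rw [hsimp] at h ⊢
    have hεeq : ρ * (1 + s) + L * s⁻¹ = ρ + 2 * Real.sqrt (ρ * L) := by
      rw [hsqrt, hsdef]
      field_simp
      nlinarith [hu2, hv2]
    linarith [h, hεeq.le]
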